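/- For every m ≥ 2, every m-free rigid word x^{e₀} t₁ x^{e₁} ⋯ t_r x^{e_r} (all eᵢ < m) is an isoterm for the variety generated by the collection of factor monoids M(w_{m,r}), r ≥ 1, where w_{m,r} = x^{m−1} t₁ x^{m−1} ⋯ t_r x^{m−1}. -/

import Mathlib

abbrev Word := List ℕ

def subst (φ : ℕ → Word) (w : Word) : Word := w.flatMap φ

inductive Deduce (S : Set (Word × Word)) : Word → Word → Prop
  | refl (w : Word) : Deduce S w w
  | symm {u v : Word} : Deduce S u v → Deduce S v u
  | trans {u v w : Word} : Deduce S u v → Deduce S v w → Deduce S u w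
  | step (a b : Word) (φ : ℕ → Word) {s t : Word} (h : (s, t) ∈ S) :
      Deduce S (a ++ subst φ s ++ b) (a ++ subst φ t ++ b)

def FM (w : Word) : Type := Option {u : Word // u <:+: w}

def fmul {w : Word} : FM w → FM w → FM w
  | some u, some v =>
      if h : (u.1 ++ v.1) <:+: w then some ⟨u.1 ++ v.1, h⟩ else none
  | _, _ => none

def fone (w : Word) : FM w := some ⟨[], List.nil_infix⟩

theorem fmul_none_left {w : Word} (a : FM w) : fmul none a = none := rfl

theorem fmul_none_right {w : Word} (a : FM w) : fmul a none = none := by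
  rcases a with _ | u <;> rfl

theorem fmul_some {w : Word} (u v : {u : Word // u <:+: w}) :
    fmul (some u) (some v) =
      if h : (u.1 ++ v.1) <:+: w then some ⟨u.1 ++ v.1, h⟩ else none := rfl

theorem fmul_assoc {w : Word} (a b c : FM w) : fmul (fmul a b) c = fmul a (fmul b c) := by
  rcases a with _ | u
  · rfl
  rcases b with _ | v
  · rfl
  rcases c with _ | t
  · show fmul _ (none : FM w) = fmul _ (fmul _ (none : FM w))
    rw [fmul_none_right]
    rfl
  rw [fmul_some, fmul_some]
  by_cases h : (u.1 ++ v.1 ++ t.1) <:+: w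
  · have h1 : (u.1 ++ v.1) <:+: w := List.IsInfix.trans ⟨[], t.1, by simp⟩ h
    have h2 : (v.1 ++ t.1) <:+: w := List.IsInfix.trans ⟨u.1, [], by simp⟩ h
    rw [dif_pos h1, fmul_some, dif_pos h2, fmul_some, dif_pos h,
      dif_pos (show (u.1 ++ (v.1 ++ t.1)) <:+: w by simpa [List.append_assoc] using h)]
    simp [List.append_assoc]
    rfl
  · by_cases h1 : (u.1 ++ v.1) <:+: w
    · rw [dif_pos h1, fmul_some, dif_neg h]
      by_cases h2 : (v.1 ++ t.1) <:+: w
      · rw [dif_pos h2, fmul_some,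
          dif_neg (fun hh => h (by simpa [List.append_assoc] using hh))]
      · rw [dif_neg h2]
        rfl
    · rw [dif_neg h1]
      erw [fmul_none_left]
      by_cases h2 : (v.1 ++ t.1) <:+: w
      · rw [dif_pos h2, fmul_some,
          dif_neg (fun hh => h1 (List.IsInfix.trans ⟨[], t.1, by simp⟩ hh))]
      · rw [dif_neg h2]
        rfl

instance (w : Word) : Monoid (FM w) where
  mul := fmul
  one := fone w
  mul_assoc := fmul_assoc
  one_mul := by
    rintro (_ | u)
    · rfl
    · show fmul (fone w) (some u) = some u
      rw [fone, fmul_some, dif_pos (by simpa using u.2)]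
      simp
      rfl
  mul_one := by
    rintro (_ | u)
    · rfl
    · show fmul (some u) (fone w) = some u
      rw [fone, fmul_some, dif_pos (by simpa using u.2)]
      simp
      rfl

def SatId (M : Type) [Monoid M] (p : Word × Word) : Prop :=
  ∀ φ : ℕ → M, (p.1.map φ).prod = (p.2.map φ).prod

def VSat (E : Set (Word × Word)) (p : Word × Word) : Prop :=
  ∀ (M : Type) [Monoid M], (∀ q ∈ E, SatId M q) → SatId M p

def ids0 : Set (Word × Word) :=
  {([0,1,2,0,3,1],[1,0,2,0,3,1]), ([0,2,0,1,3,1],[0,2,1,0,3,1]), ([0,2,1,3,0,1],[0,2,1,3,1,0])}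

def idA (n : ℕ) : Word × Word :=
  (List.replicate n 0 ++ (List.range n).map (· + 1),
   ((List.range n).map (fun i => [i + 1, 0])).flatten)

def rigid (e₀ : ℕ) (es : List ℕ) : Word :=
  List.replicate e₀ 0 ++ (es.zipIdx.map (fun p => (p.2 + 1) :: List.replicate p.1 0)).flatten

def Bword (n i : ℕ) : Word := List.replicate i 0 ++ 1 :: List.replicate (n - 1 - i) 0

def wmr (m r : ℕ) : Word := rigid (m - 1) (List.replicate r (m - 1))

/-! ### Auxiliary machinery for stmt13 -/

theorem FM.mul_eq {W : Word} (a b : FM W) : a * b = fmul a b := rfl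

/-- The canonical infix-checked substitution into a factor monoid. -/
def phiOf (W : Word) (ψ : ℕ → Word) (c : ℕ) : FM W :=
  if h : ψ c <:+: W then some ⟨ψ c, h⟩ else none

theorem phiOf_def (W : Word) (ψ : ℕ → Word) (c : ℕ) :
    phiOf W ψ c = if h : ψ c <:+: W then some ⟨ψ c, h⟩ else none := rfl

/-- Product in the factor monoid of a word mapped by an infix-checked substitution. -/
theorem prod_map_dite (W : Word) (ψ : ℕ → Word) :
    ∀ v : Word, (∀ c ∈ v, ψ c <:+: W) →
    (v.map (phiOf W ψ)).prod
      = if h : (v.flatMap ψ) <:+: W then (some ⟨v.flatMap ψ, h⟩ : FM W) else none := by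
  intro v
  induction v with
  | nil =>
      intro _
      rw [List.map_nil, List.prod_nil, List.flatMap_nil, dif_pos List.nil_infix]
      rfl
  | cons c v ih =>
      intro h
      rw [List.map_cons, List.prod_cons, ih (fun d hd => h d (List.mem_cons_of_mem _ hd)),
        phiOf_def, dif_pos (h c (List.mem_cons_self))]
      erw [FM.mul_eq]
      rw [List.flatMap_cons]
      by_cases h2 : (v.flatMap ψ) <:+: W
      · rw [dif_pos h2, fmul_some]
      · rw [dif_neg h2]
        erw [fmul_none_right]
        rw [dif_neg (fun h3 => h2 (((List.suffix_append (ψ c) (v.flatMap ψ)).isInfix).trans h3))]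

/-- `rigid` with a letter offset. -/
def rigidAux (k e₀ : ℕ) (es : List ℕ) : Word :=
  List.replicate e₀ 0 ++ ((es.zipIdx k).map (fun p => (p.2 + 1) :: List.replicate p.1 0)).flatten

theorem rigid_eq_aux (e₀ : ℕ) (es : List ℕ) : rigid e₀ es = rigidAux 0 e₀ es := rfl

theorem rigidAux_nil (k e₀ : ℕ) : rigidAux k e₀ [] = List.replicate e₀ 0 := by
  simp [rigidAux]

theorem rigidAux_cons (k e₀ e : ℕ) (es : List ℕ) :
    rigidAux k e₀ (e :: es) = List.replicate e₀ 0 ++ (k + 1) :: rigidAux (k + 1) e es := by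
  simp [rigidAux, List.zipIdx_cons]

theorem mem_rigidAux {c k e₀ : ℕ} {es : List ℕ} (h : c ∈ rigidAux k e₀ es) :
    c = 0 ∨ (k + 1 ≤ c ∧ c ≤ k + es.length) := by
  induction es generalizing k e₀ with
  | nil =>
      rw [rigidAux_nil] at h
      exact Or.inl (List.eq_of_mem_replicate h)
  | cons e es ih =>
      rw [rigidAux_cons] at h
      rcases List.mem_append.1 h with h | h
      · exact Or.inl (List.eq_of_mem_replicate h)
      · rcases List.mem_cons.1 h with rfl | h
        · right; simp only [List.length_cons]; omega
        · rcases ih h with h | ⟨h1, h2⟩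
          · exact Or.inl h
          · exact Or.inr ⟨by omega, by simp; omega⟩

theorem marker_infix (m : ℕ) :
    ∀ n k i : ℕ, k ≤ i → i < k + n →
      (List.replicate (m - 1) 0 ++ [i + 1]) <:+: rigidAux k (m - 1) (List.replicate n (m - 1)) := by
  intro n
  induction n with
  | zero => intro k i h1 h2; omega
  | succ n ih =>
      intro k i h1 h2
      rw [List.replicate_succ, rigidAux_cons]
      rcases Nat.eq_or_lt_of_le h1 with rfl | hlt
      · refine (List.IsPrefix.isInfix ?_)
        refine ⟨rigidAux (k + 1) (m - 1) (List.replicate n (m - 1)), ?_⟩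
        simp
      · have := ih (k + 1) i hlt (by omega)
        refine this.trans (List.IsSuffix.isInfix ?_)
        exact ⟨List.replicate (m - 1) 0 ++ [k + 1], by simp⟩

theorem zero_infix (m : ℕ) (hm : 2 ≤ m) (k e₀ : ℕ) (es : List ℕ) (he : 1 ≤ e₀) :
    [0] <:+: rigidAux k e₀ es := by
  refine (List.IsPrefix.isInfix ?_)
  have h1 : ([0] : Word) <+: List.replicate e₀ 0 := by
    refine ⟨List.replicate (e₀ - 1) 0, ?_⟩
    rw [show ([0] : Word) = List.replicate 1 0 from rfl, ← List.replicate_add]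
    congr 1; omega
  exact h1.trans (by rw [rigidAux]; exact List.prefix_append _ _)

theorem flatMap_replicate_zero (ψ : ℕ → Word) (hψ0 : ψ 0 = [0]) (n : ℕ) :
    (List.replicate n 0).flatMap ψ = List.replicate n 0 := by
  induction n with
  | zero => rfl
  | succ n ih => rw [List.replicate_succ, List.flatMap_cons, hψ0, ih]; rfl

/-- Key structural computation: the padded image of the rigid word is `wmr`. -/
theorem key_lemma (m E₀ : ℕ) (ES : List ℕ) (hE : ∀ i, (E₀ :: ES).getD i 0 ≤ m - 1)
    (ψ : ℕ → Word) (hψ0 : ψ 0 = [0])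
    (hψs : ∀ i, ψ (i + 1) = List.replicate (m - 1 - (E₀ :: ES).getD i 0) 0 ++ [i + 1]) :
    ∀ d k, d + k = ES.length →
      (rigidAux k ((E₀ :: ES).getD k 0) (ES.drop k)).flatMap ψ
          ++ List.replicate (m - 1 - (E₀ :: ES).getD ES.length 0) 0
        = rigidAux k (m - 1) (List.replicate d (m - 1)) := by
  intro d
  induction d with
  | zero =>
      intro k hk
      have hk' : k = ES.length := by omega
      subst hk'
      rw [List.drop_length, rigidAux_nil, List.replicate_zero, rigidAux_nil,
        flatMap_replicate_zero ψ hψ0, ← List.replicate_add]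
      congr 1
      have := hE ES.length
      omega
  | succ d ih =>
      intro k hk
      have hklt : k < ES.length := by omega
      rw [List.drop_eq_getElem_cons hklt, rigidAux_cons, List.flatMap_append,
        flatMap_replicate_zero ψ hψ0, List.flatMap_cons, hψs k]
      have hgetd : (E₀ :: ES).getD (k + 1) 0 = ES[k] := by
        rw [List.getD_cons_succ, List.getD_eq_getElem ES 0 hklt]
      have hih := ih (k + 1) (by omega)
      rw [hgetd] at hih
      rw [List.replicate_succ, rigidAux_cons]
      have hpad : List.replicate ((E₀ :: ES).getD k 0) 0
            ++ List.replicate (m - 1 - (E₀ :: ES).getD k 0) 0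
          = List.replicate (m - 1) 0 := by
        rw [← List.replicate_add]
        congr 1
        have := hE k
        omega
      rw [← hih, ← hpad]
      simp only [List.append_assoc, List.cons_append, List.nil_append, List.replicate_add]

/-- Injectivity of `flatMap` for substitutions whose pieces end in their letter. -/
theorem flatMap_inj (ψ : ℕ → Word) (R : ℕ) (hψ : ∀ c ≤ R, (ψ c).getLast? = some c) :
    ∀ v₁ v₂ : Word, (∀ c ∈ v₁, c ≤ R) → (∀ c ∈ v₂, c ≤ R) →
      v₁.flatMap ψ = v₂.flatMap ψ → v₁ = v₂ := by
  have hne : ∀ c ≤ R, ψ c ≠ [] := by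
    intro c hc h
    have := hψ c hc
    rw [h] at this
    simp at this
  intro v₁
  induction v₁ using List.reverseRecOn with
  | nil =>
      intro v₂ _ h2 he
      rcases v₂.eq_nil_or_concat with rfl | ⟨b, d, rfl⟩
      · rfl
      · exfalso
        rw [List.concat_eq_append] at h2 he
        have : (b ++ [d]).flatMap ψ = [] := he.symm
        exact hne d (h2 d (by simp)) (List.flatMap_eq_nil_iff.1 this d (by simp))
  | append_singleton a c ih =>
      intro v₂ h1 h2 he
      rcases v₂.eq_nil_or_concat with rfl | ⟨b, d, rfl⟩
      · exfalso
        exact hne c (h1 c (by simp)) (List.flatMap_eq_nil_iff.1 he c (by simp))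
      · rw [List.concat_eq_append] at h2 he ⊢
        have hc : c ≤ R := h1 c (by simp)
        have hd : d ≤ R := h2 d (by simp)
        simp only [List.flatMap_append, List.flatMap_cons, List.flatMap_nil,
          List.append_nil] at he
        have hlast := congrArg List.getLast? he
        rw [List.getLast?_append, List.getLast?_append, hψ c hc, hψ d hd] at hlast
        simp at hlast
        subst hlast
        have hab : a.flatMap ψ = b.flatMap ψ := List.append_cancel_right he
        rw [ih b (fun x hx => h1 x (by simp [hx])) (fun x hx => h2 x (by simp [hx])) hab]

def psia (a : ℕ) : ℕ → Word := fun c => if c = a then [1] else []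

def psi (m : ℕ) (L : List ℕ) : ℕ → Word
  | 0 => [0]
  | (i + 1) => List.replicate (m - 1 - L.getD i 0) 0 ++ [i + 1]

theorem psi_zero (m : ℕ) (L : List ℕ) : psi m L 0 = [0] := rfl

theorem psi_succ (m : ℕ) (L : List ℕ) (i : ℕ) :
    psi m L (i + 1) = List.replicate (m - 1 - L.getD i 0) 0 ++ [i + 1] := rfl

/-- For every `m ≥ 2`, every `m`-free rigid word is an isoterm for the
variety generated by the factor monoids `M(w_{m,r})`, `r ≥ 1` (an identity holds in the
generated variety iff it holds in all the generators). -/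
theorem stmt13 (m : ℕ) (hm : 2 ≤ m) (e₀ : ℕ) (es : List ℕ)
    (h0 : e₀ < m) (hes : ∀ e ∈ es, e < m) :
    ∀ v : Word, (∀ r, 1 ≤ r → SatId (FM (wmr m r)) (rigid e₀ es, v)) →
      v = rigid e₀ es := by
  intro v hv
  have hwmem : ∀ c ∈ rigid e₀ es, c ≤ es.length := by
    intro c hc
    rw [rigid_eq_aux] at hc
    rcases mem_rigidAux hc with rfl | ⟨_, h⟩
    · exact Nat.zero_le _
    · simpa using h
  have hwmr : ∀ r, wmr m r = rigidAux 0 (m - 1) (List.replicate r (m - 1)) := fun _ => rfl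
  -- Step 1: the alphabet of v is contained in {0, ..., es.length}
  have hvmem : ∀ c ∈ v, c ≤ es.length := by
    intro a ha
    by_contra hgt
    have hgt : es.length < a := by omega
    have hinfa : ∀ c, psia a c <:+: wmr m 1 := by
      intro c
      by_cases hc : c = a
      · have h1 : (List.replicate (m - 1) 0 ++ [0 + 1]) <:+:
            rigidAux 0 (m - 1) (List.replicate 1 (m - 1)) :=
          marker_infix m 1 0 0 le_rfl (by omega)
        have h2 : psia a c = [1] := by simp [psia, hc]
        rw [h2, hwmr 1]
        exact ((List.suffix_append (List.replicate (m - 1) 0) [0 + 1]).isInfix).trans h1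
      · have h2 : psia a c = [] := by simp [psia, hc]
        rw [h2]
        exact List.nil_infix
    have hw1 : (rigid e₀ es).flatMap (psia a) = [] := by
      refine List.flatMap_eq_nil_iff.2 (fun c hc => ?_)
      have := hwmem c hc
      simp only [psia, if_neg (by omega : ¬ c = a)]
    have hpw := prod_map_dite (wmr m 1) (psia a) (rigid e₀ es) (fun c _ => hinfa c)
    have hpv := prod_map_dite (wmr m 1) (psia a) v (fun c _ => hinfa c)
    have heq : ((rigid e₀ es).map (phiOf (wmr m 1) (psia a))).prod
        = (v.map (phiOf (wmr m 1) (psia a))).prod :=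
      hv 1 le_rfl _
    rw [hpw, hpv, hw1, dif_pos List.nil_infix] at heq
    by_cases h : v.flatMap (psia a) <:+: wmr m 1
    · rw [dif_pos h] at heq
      injection heq with heq
      have h2 : v.flatMap (psia a) = [] := (congrArg Subtype.val heq).symm
      have := List.flatMap_eq_nil_iff.1 h2 a ha
      simp [psia] at this
    · rw [dif_neg h] at heq
      cases heq
  -- Step 2: structural comparison in FM (wmr m r')
  set r' := max es.length 1 with hr'
  have hr1 : 1 ≤ r' := le_max_right _ _
  have hE : ∀ i, (e₀ :: es).getD i 0 ≤ m - 1 := by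
    intro i
    by_cases hi : i < (e₀ :: es).length
    · rw [List.getD_eq_getElem _ 0 hi]
      have hmem : (e₀ :: es)[i] ∈ e₀ :: es := List.getElem_mem hi
      rcases List.mem_cons.1 hmem with h | h
      · omega
      · have := hes _ h; omega
    · rw [List.getD_eq_default _ 0 (by omega)]
      omega
  have hkey := key_lemma m e₀ es hE (psi m (e₀ :: es)) (psi_zero m _) (psi_succ m _)
    es.length 0 (by omega)
  simp only [List.getD_cons_zero, List.drop_zero] at hkey
  rw [← rigid_eq_aux] at hkey
  have hWpre : rigidAux 0 (m - 1) (List.replicate es.length (m - 1)) <+: wmr m r' := by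
    rcases Nat.eq_zero_or_pos es.length with h | h
    · have hr'1 : r' = 1 := by rw [hr']; omega
      rw [h, List.replicate_zero, rigidAux_nil, hr'1, hwmr 1, rigidAux]
      exact List.prefix_append _ _
    · have hr'e : r' = es.length := by rw [hr']; omega
      rw [hr'e, hwmr]
  have hinf_w : (rigid e₀ es).flatMap (psi m (e₀ :: es)) <:+: wmr m r' :=
    ((List.IsPrefix.trans ⟨_, hkey⟩ hWpre).isInfix)
  have hψinf : ∀ c ≤ r', psi m (e₀ :: es) c <:+: wmr m r' := by
    intro c hc
    cases c with
    | zero => rw [psi_zero, hwmr]; exact zero_infix m hm 0 (m - 1) _ (by omega)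
    | succ i =>
        have hmark := marker_infix m r' 0 i (Nat.zero_le i) (by omega)
        rw [psi_succ, hwmr r']
        refine List.IsInfix.trans (List.IsSuffix.isInfix ?_) hmark
        refine ⟨List.replicate ((m - 1) - (m - 1 - (e₀ :: es).getD i 0)) 0, ?_⟩
        rw [← List.append_assoc, ← List.replicate_add]
        congr 2
        omega
  have hpw := prod_map_dite (wmr m r') (psi m (e₀ :: es)) (rigid e₀ es)
    (fun c hc => hψinf c ((hwmem c hc).trans (le_max_left _ _)))
  have hpv := prod_map_dite (wmr m r') (psi m (e₀ :: es)) v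
    (fun c hc => hψinf c ((hvmem c hc).trans (le_max_left _ _)))
  have heq : ((rigid e₀ es).map (phiOf (wmr m r') (psi m (e₀ :: es)))).prod
      = (v.map (phiOf (wmr m r') (psi m (e₀ :: es)))).prod :=
    hv r' hr1 _
  rw [hpw, hpv, dif_pos hinf_w] at heq
  have hlast : ∀ c ≤ r', (psi m (e₀ :: es) c).getLast? = some c := by
    intro c _
    cases c with
    | zero => rfl
    | succ i => rw [psi_succ]; exact List.getLast?_concat
  by_cases h : v.flatMap (psi m (e₀ :: es)) <:+: wmr m r'
  · rw [dif_pos h] at heq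
    injection heq with heq
    have h2 : (rigid e₀ es).flatMap (psi m (e₀ :: es)) = v.flatMap (psi m (e₀ :: es)) :=
      congrArg Subtype.val heq
    exact flatMap_inj (psi m (e₀ :: es)) r' hlast v (rigid e₀ es)
      (fun c hc => (hvmem c hc).trans (le_max_left _ _))
      (fun c hc => (hwmem c hc).trans (le_max_left _ _)) h2.symm
  · rw [dif_neg h] at heq
    cases heq
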